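/- For every n ≥ 1, there is a unique (up to isomorphism) B-semimodule E with rank n and free rank 1, namely E = X^∨ where X = {1,…,n} is totally ordered, X^∨ = X ∪ {0} with addition given by join and 0 as the neutral element. -/

import Mathlib

/-- For `n ≥ 1`, a `B`-semimodule of rank `n` (least cardinality of a generating set)
and free rank 1 (selective) is unique up to isomorphism: it is isomorphic to
`X^∨ = {0} ∪ {1,…,n}`, realized as `Fin (n+1)` with `max` as addition and `0` as zero. -/
theorem stmt4 (n : ℕ) (hn : 1 ≤ n) (E : Type*) [AddCommMonoid E]
    (hidem : ∀ x : E, x + x = x)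
    (hsel : ∀ x y : E, x + y = x ∨ x + y = y)
    (hrank : IsLeast {k : ℕ | ∃ S : Finset E, S.card = k ∧
      AddSubmonoid.closure (S : Set E) = ⊤} n) :
    ∃ e : E ≃ Fin (n + 1), e 0 = 0 ∧ ∀ x y : E, e (x + y) = max (e x) (e y) := by
  classical
  obtain ⟨⟨S, hScard, hSgen⟩, hleast⟩ := hrank
  -- 0 ∉ S
  have h0S : (0 : E) ∉ S := by
    intro h0
    have hgen' : AddSubmonoid.closure ((S.erase 0 : Finset E) : Set E) = ⊤ := by
      have : (insert (0:E) ((S.erase 0 : Finset E) : Set E)) = (S : Set E) := by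
        rw [← Finset.coe_insert, Finset.insert_erase h0]
      rw [eq_top_iff, ← hSgen, ← this]
      refine AddSubmonoid.closure_le.mpr ?_
      intro x hx
      rcases hx with rfl | hx
      · exact zero_mem _
      · exact AddSubmonoid.subset_closure hx
    have := hleast ⟨S.erase 0, rfl, hgen'⟩
    have hc : (S.erase 0).card = n - 1 := by rw [Finset.card_erase_of_mem h0, hScard]
    omega
  -- every element is in insert 0 S
  have hmem : ∀ x : E, x ∈ insert (0:E) S := by
    intro x
    have hx : x ∈ AddSubmonoid.closure (S : Set E) := by rw [hSgen]; trivial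
    induction hx using AddSubmonoid.closure_induction with
    | mem y hy => exact Finset.mem_insert_of_mem hy
    | zero => exact Finset.mem_insert_self _ _
    | add a b _ _ ha hb =>
        rcases hsel a b with h | h
        · rw [h]; exact ha
        · rw [h]; exact hb
  letI : Fintype E := ⟨insert 0 S, hmem⟩
  have hcard : Fintype.card E = n + 1 := by
    show (insert 0 S).card = n + 1
    rw [Finset.card_insert_of_notMem h0S, hScard]
  -- linear order
  letI : LinearOrder E :=
    { le := fun x y => x + y = y
      le_refl := hidem
      le_trans := fun a b c hab hbc => by
        change a + b = b at hab
        change b + c = c at hbc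
        change a + c = c
        rw [← hbc, ← add_assoc, hab]
      le_antisymm := fun a b hab hba => by
        change a + b = b at hab
        change b + a = a at hba
        rw [← hab, add_comm, hba]
      le_total := fun a b => by
        rcases hsel a b with h | h
        · right; change b + a = a; rw [add_comm]; exact h
        · left; exact h
      toDecidableLE := fun a b => Classical.dec _ }
  letI : OrderBot E :=
    { bot := 0
      bot_le := fun a => show (0:E) + a = a from zero_add a }
  have hmax : ∀ x y : E, x + y = max x y := by
    intro x y
    rcases le_total x y with h | h
    · rw [max_eq_right h]; exact h
    · rw [max_eq_left h, add_comm]; exact h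
  let f : Fin (n + 1) ≃o E := monoEquivOfFin E hcard
  refine ⟨f.symm.toEquiv, ?_, ?_⟩
  · show f.symm (⊥ : E) = (⊥ : Fin (n + 1))
    exact map_bot f.symm
  · intro x y
    rw [hmax]
    show f.symm (max x y) = max (f.symm x) (f.symm y)
    exact f.symm.monotone.map_max
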